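/- Let 2 ≤ d₁ ≤ d₂ be real numbers, and for i = 1, 2 let Ξᵢ ∈ [1.51, 2.05] satisfy dᵢ·(2Ξᵢ·e^{1/Ξᵢ} + Ξᵢ² − e^{2/Ξᵢ} − Ξᵢ²·e^{1/Ξᵢ}) = e^{2/Ξᵢ}. Then d₁·Ξ₁ ≤ d₂·Ξ₂; i.e., d·Ξ_d is monotonically increasing in d. -/

import Mathlib

noncomputable def xiAux (x : ℝ) : ℝ :=
  2 * Real.exp (-x⁻¹) + x * Real.exp (-(2 * x⁻¹)) - x * Real.exp (-x⁻¹) - x⁻¹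

lemma expNeg_bounds {s : ℝ} (h0 : 0 ≤ s) (h1 : s ≤ 1) :
    |Real.exp (-s) - (1 - s + s ^ 2 / 2 - s ^ 3 / 6)| ≤ 5 * s ^ 4 / 96 := by
  have hb : |(-s)| ≤ 1 := by rw [abs_neg, abs_of_nonneg h0]; exact h1
  have h := Real.exp_bound hb (n := 4) (by norm_num)
  simp only [Finset.sum_range_succ, Finset.sum_range_zero] at h
  rw [abs_neg, abs_of_nonneg h0] at h
  norm_num [Nat.factorial] at h
  rw [abs_le] at h ⊢
  constructor <;> nlinarith [h.1, h.2]

lemma xiAux_hasDeriv {x : ℝ} (hx : 0 < x) :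
    HasDerivAt xiAux
      ((2 * (x ^ 2)⁻¹ - 1 - x⁻¹) * Real.exp (-x⁻¹)
        + (1 + 2 * x⁻¹) * Real.exp (-(2 * x⁻¹)) + (x ^ 2)⁻¹) x := by
  have hne := hx.ne'
  have h1 : HasDerivAt (fun y : ℝ => -y⁻¹) ((x ^ 2)⁻¹) x := by
    simpa using (hasDerivAt_inv hne).fun_neg
  have h2 : HasDerivAt (fun y : ℝ => Real.exp (-y⁻¹)) (Real.exp (-x⁻¹) * (x ^ 2)⁻¹) x := h1.exp
  have h3 : HasDerivAt (fun y : ℝ => -(2 * y⁻¹)) (2 * (x ^ 2)⁻¹) x := by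
    have := ((hasDerivAt_inv hne).const_mul (2 : ℝ)).fun_neg
    exact this.congr_deriv (by ring)
  have h4 : HasDerivAt (fun y : ℝ => Real.exp (-(2 * y⁻¹)))
      (Real.exp (-(2 * x⁻¹)) * (2 * (x ^ 2)⁻¹)) x := h3.exp
  have h5 := (((h2.const_mul (2 : ℝ)).add ((hasDerivAt_id x).mul h4)).sub
      ((hasDerivAt_id x).mul h2)).sub (hasDerivAt_inv hne)
  refine HasDerivAt.congr_deriv (f := xiAux) h5 ?_
  simp only [id_eq]
  field_simp
  ring

lemma xiAux_strictMono : StrictMonoOn xiAux (Set.Icc (1.51 : ℝ) 2.05) := by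
  apply strictMonoOn_of_deriv_pos (convex_Icc _ _)
  · intro x hx
    have hx0 : (0 : ℝ) < x := lt_of_lt_of_le (by norm_num) hx.1
    exact (xiAux_hasDeriv hx0).continuousAt.continuousWithinAt
  · intro x hx
    rw [interior_Icc] at hx
    have hx0 : (0 : ℝ) < x := lt_of_lt_of_le (by norm_num) hx.1.le
    rw [(xiAux_hasDeriv hx0).deriv]
    set s : ℝ := x⁻¹ with hs
    have hsx : s * x = 1 := inv_mul_cancel₀ hx0.ne'
    have hspos : 0 < s := inv_pos.mpr hx0
    have hs0 : 0.48 ≤ s := by nlinarith [hx.2]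
    have hs1 : s ≤ 0.67 := by nlinarith [hx.1]
    have hx2 : (x ^ 2)⁻¹ = s ^ 2 := by rw [hs]; ring
    have hE2 : Real.exp (-(2 * s)) = Real.exp (-s) ^ 2 := by
      rw [show -(2 * s) = -s + -s by ring, Real.exp_add]; ring
    have hb := expNeg_bounds hspos.le (by linarith)
    rw [abs_le] at hb
    rw [hx2, hE2]
    set E := Real.exp (-s)
    nlinarith [hb.1, hb.2, sq_nonneg (E - 1 + s), sq_nonneg s, sq_nonneg (s - 0.5),
      sq_nonneg (E - 0.5), mul_pos hspos hspos]

lemma key_identity {d x : ℝ} (hd : 0 < d) (hx : 0 < x)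
    (h : d * (2 * x * Real.exp (1 / x) + x ^ 2 - Real.exp (2 / x)
        - x ^ 2 * Real.exp (1 / x)) = Real.exp (2 / x)) :
    d * x * xiAux x = 1 := by
  have hxne := hx.ne'
  have hE : Real.exp (-x⁻¹) = (Real.exp (1 / x))⁻¹ := by
    rw [← Real.exp_neg]; norm_num
  have hE2 : Real.exp (-(2 * x⁻¹)) = (Real.exp (1 / x) ^ 2)⁻¹ := by
    have h2x : Real.exp (1 / x) ^ 2 = Real.exp (2 * x⁻¹) := by
      rw [show (2 : ℝ) * x⁻¹ = 1 / x + 1 / x by ring, Real.exp_add]; ring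
    rw [h2x, ← Real.exp_neg]
  have hE2' : Real.exp (2 / x) = Real.exp (1 / x) ^ 2 := by
    rw [show (2 : ℝ) / x = 1 / x + 1 / x by ring, Real.exp_add]; ring
  have hEpos : 0 < Real.exp (1 / x) := Real.exp_pos _
  rw [xiAux, hE, hE2]
  rw [hE2'] at h
  field_simp
  linear_combination h

/-- `d · Ξ_d` is monotonically increasing in `d`. -/
theorem d_xi_increasing (d₁ d₂ : ℝ) (hd₁ : 2 ≤ d₁) (hd : d₁ ≤ d₂)
    (Ξ₁ Ξ₂ : ℝ)
    (hΞ₁mem : Ξ₁ ∈ Set.Icc (1.51 : ℝ) 2.05) (hΞ₂mem : Ξ₂ ∈ Set.Icc (1.51 : ℝ) 2.05)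
    (hΞ₁ : d₁ * (2 * Ξ₁ * Real.exp (1 / Ξ₁) + Ξ₁ ^ 2 - Real.exp (2 / Ξ₁)
        - Ξ₁ ^ 2 * Real.exp (1 / Ξ₁)) = Real.exp (2 / Ξ₁))
    (hΞ₂ : d₂ * (2 * Ξ₂ * Real.exp (1 / Ξ₂) + Ξ₂ ^ 2 - Real.exp (2 / Ξ₂)
        - Ξ₂ ^ 2 * Real.exp (1 / Ξ₂)) = Real.exp (2 / Ξ₂)) :
    d₁ * Ξ₁ ≤ d₂ * Ξ₂ := by
  have hx₁ : (0 : ℝ) < Ξ₁ := lt_of_lt_of_le (by norm_num) hΞ₁mem.1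
  have hx₂ : (0 : ℝ) < Ξ₂ := lt_of_lt_of_le (by norm_num) hΞ₂mem.1
  have hd₁pos : (0 : ℝ) < d₁ := by linarith
  have hd₂pos : (0 : ℝ) < d₂ := by linarith
  have k₁ := key_identity hd₁pos hx₁ hΞ₁
  have k₂ := key_identity hd₂pos hx₂ hΞ₂
  have hu₁ : 0 < xiAux Ξ₁ := by nlinarith [mul_pos hd₁pos hx₁]
  have hu₂ : 0 < xiAux Ξ₂ := by nlinarith [mul_pos hd₂pos hx₂]
  rcases le_or_gt Ξ₂ Ξ₁ with hle | hlt
  · have hmono : xiAux Ξ₂ ≤ xiAux Ξ₁ :=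
      xiAux_strictMono.monotoneOn hΞ₂mem hΞ₁mem hle
    have e₁ : d₁ * Ξ₁ = 1 / xiAux Ξ₁ := by
      field_simp [hu₁.ne']; linarith [k₁]
    have e₂ : d₂ * Ξ₂ = 1 / xiAux Ξ₂ := by
      field_simp [hu₂.ne']; linarith [k₂]
    rw [e₁, e₂]
    exact one_div_le_one_div_of_le hu₂ hmono
  · exact mul_le_mul hd hlt.le hx₁.le hd₂pos.le
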